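/- Let S_{≥h}(n,k) denote the number of partitions of an n-set into k blocks each of size at least h. Then for 0 < t < 1/k, Σ_{n≥0} S_{≥h}(n,k) t^n = (1/(k! t)) ∫_0^∞ e^{-x/t} (e^x - 1 - x - ··· - x^{h-1}/(h-1)!)^k dx. -/

import Mathlib

set_option linter.unusedSectionVars false
set_option maxHeartbeats 1000000

open MeasureTheory

section Counting

open Finset

variable {α β : Type*} [Fintype α] [DecidableEq α] [Fintype β] [DecidableEq β]

private lemma nat_card_sigma {ι : Type*} [Fintype ι] (F : ι → Type*) [∀ i, Finite (F i)] :
    Nat.card (Σ i, F i) = ∑ i, Nat.card (F i) := by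
  letI : ∀ i, Fintype (F i) := fun i => Fintype.ofFinite _
  simp [Nat.card_eq_fintype_card, Fintype.card_sigma]

private lemma sum_card_fiber (f : α → β) (s : Finset β) :
    ∑ j ∈ s, (univ.filter fun x => f x = j).card = (univ.filter fun x => f x ∈ s).card := by
  rw [Finset.card_eq_sum_card_fiberwise (f := f) (s := univ.filter fun x => f x ∈ s) (t := s) (fun x hx => (mem_filter.mp hx).2)]
  refine Finset.sum_congr rfl fun j hj => ?_
  congr 1
  ext x
  simp only [mem_filter, mem_univ, true_and]
  exact ⟨fun hx => ⟨hx ▸ hj, hx⟩, fun hx => hx.2⟩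

private lemma forced_mem {f : α → β} {s : Finset β} {g : β → ℕ}
    (hg : ∑ j ∈ s, g j = Fintype.card α)
    (hf : ∀ j ∈ s, (univ.filter fun x => f x = j).card = g j) (x : α) : f x ∈ s := by
  have h1 : (univ.filter fun x => f x ∈ s).card = Fintype.card α := by
    rw [← sum_card_fiber f s, Finset.sum_congr rfl hf, hg]
  have h2 : (univ.filter fun x => f x ∈ s) = univ := Finset.eq_univ_of_card _ h1
  have := Finset.mem_univ x
  rw [← h2, mem_filter] at this
  exact this.2

private lemma card_filter_subtype (f : α → β) (A : Finset α) {a : β}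
    (hA : ∀ x, f x = a ↔ x ∈ A) {j : β} (hj : j ≠ a) :
    (univ.filter fun y : {x : α // x ∉ A} => f y.1 = j).card
      = (univ.filter fun x : α => f x = j).card := by
  apply Finset.card_bij (fun y _ => y.1)
  · intro y hy
    simp only [mem_filter, mem_univ, true_and] at hy ⊢
    exact hy
  · intro y1 _ y2 _ hy
    exact Subtype.ext hy
  · intro x hx
    simp only [mem_filter, mem_univ, true_and] at hx
    have hxA : x ∉ A := by
      intro hmem
      exact hj (hx ▸ (hA x).mpr hmem)
    exact ⟨⟨x, hxA⟩, by simp [hx], rfl⟩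

private theorem card_fiber_eq_multinomial {β : Type*} [Fintype β] [DecidableEq β] (s : Finset β) :
    ∀ (α : Type) [Fintype α] [DecidableEq α] (g : β → ℕ),
      ∑ j ∈ s, g j = Fintype.card α →
      Nat.card {f : α → β // ∀ j ∈ s, (univ.filter fun x => f x = j).card = g j}
        = Nat.multinomial s g := by
  classical
  induction s using Finset.cons_induction with
  | empty =>
    intro α _ _ g hg
    have : IsEmpty α := Fintype.card_eq_zero_iff.mp (by rw [← hg]; simp)
    rw [Nat.card_congr (Equiv.subtypeUnivEquiv (by simp))]
    rw [Nat.card_unique]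
    simp [Nat.multinomial]
  | cons a s' ha IH =>
    intro α _ _ g hg
    rw [Finset.sum_cons] at hg
    have hcompl : ∀ A : Finset α, A.card = g a →
        ∑ j ∈ s', g j = Fintype.card {x : α // x ∉ A} := by
      intro A hA
      rw [Fintype.card_subtype_compl, Fintype.card_coe, hA]
      omega
    -- the extension map
    set ext : ∀ (A : Finset α), ({x : α // x ∉ A} → β) → α → β :=
      fun A f' x => if hx : x ∈ A then a else f' ⟨x, hx⟩ with hext
    have ext_val : ∀ (A : Finset α) (f' : {x : α // x ∉ A} → β) (x : α) (hx : x ∉ A),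
        ext A f' x = f' ⟨x, hx⟩ := fun A f' x hx => dif_neg hx
    have ext_iff : ∀ (A : {A : Finset α // A.card = g a})
        (f' : {f' : {x : α // x ∉ A.1} → β //
          ∀ j ∈ s', (univ.filter fun y => f' y = j).card = g j}) (x : α),
        ext A.1 f'.1 x = a ↔ x ∈ A.1 := by
      intro A f' x
      have hr : ∀ y, f'.1 y ∈ s' := forced_mem (hcompl A.1 A.2) f'.2
      constructor
      · intro hx
        by_contra hmem
        rw [ext_val _ _ x hmem] at hx
        exact ha (hx ▸ hr ⟨x, hmem⟩)
      · intro hx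
        simp [hext, hx]
    have bwd_prop : ∀ (A : {A : Finset α // A.card = g a})
        (f' : {f' : {x : α // x ∉ A.1} → β //
          ∀ j ∈ s', (univ.filter fun y => f' y = j).card = g j})
        (j : β), j ∈ cons a s' ha →
        (univ.filter fun x => ext A.1 f'.1 x = j).card = g j := by
      intro A f' j hj
      rcases Finset.mem_cons.mp hj with rfl | hj'
      · have : (univ.filter fun x => ext A.1 f'.1 x = j) = A.1 := by
          ext x
          simp only [mem_filter, mem_univ, true_and]
          exact ext_iff A f' x
        rw [this, A.2]
      · have hja : j ≠ a := fun hEq => ha (hEq ▸ hj')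
        rw [← card_filter_subtype (ext A.1 f'.1) A.1 (ext_iff A f') hja]
        have : (univ.filter fun y : {x // x ∉ A.1} => ext A.1 f'.1 y.1 = j)
            = (univ.filter fun y => f'.1 y = j) := by
          apply Finset.filter_congr
          intro y _
          rw [ext_val _ _ y.1 y.2]
        rw [this]
        exact f'.2 j hj'
    set S := Σ A : {A : Finset α // A.card = g a},
        {f' : {x : α // x ∉ A.1} → β //
          ∀ j ∈ s', (univ.filter fun y => f' y = j).card = g j} with hS
    set bwd : S → {f : α → β // ∀ j ∈ cons a s' ha, (univ.filter fun x => f x = j).card = g j} :=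
      fun p => ⟨ext p.1.1 p.2.1, bwd_prop p.1 p.2⟩ with hbwd
    have hinj : Function.Injective bwd := by
      rintro ⟨A₁, f₁⟩ ⟨A₂, f₂⟩ hEq
      have hfun : ext A₁.1 f₁.1 = ext A₂.1 f₂.1 := congrArg Subtype.val hEq
      have hA : A₁ = A₂ := Subtype.ext (by
        ext x
        rw [← ext_iff A₁ f₁ x, ← ext_iff A₂ f₂ x, hfun])
      subst hA
      refine congrArg (Sigma.mk A₁) (Subtype.ext (funext fun y => ?_))
      have h1 := ext_val A₁.1 f₁.1 y.1 y.2
      have h2 := ext_val A₁.1 f₂.1 y.1 y.2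
      rw [← h1, ← h2, hfun]
    have hsurj : Function.Surjective bwd := by
      rintro ⟨f, hf⟩
      have hfa : (univ.filter fun x => f x = a).card = g a := hf a (mem_cons_self a s')
      have hiff : ∀ x : α, f x = a ↔ x ∈ univ.filter fun x => f x = a := by
        intro x; simp
      refine ⟨⟨⟨univ.filter fun x => f x = a, hfa⟩, ⟨fun y => f y.1, ?_⟩⟩, ?_⟩
      · intro j hj
        have hja : j ≠ a := fun hEq => ha (hEq ▸ hj)
        rw [card_filter_subtype f _ hiff hja]
        exact hf j (Finset.mem_cons_of_mem hj)
      · apply Subtype.ext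
        funext x
        show ext _ _ x = f x
        by_cases hx : x ∈ univ.filter fun x => f x = a
        · rw [hext]
          simp only []
          rw [dif_pos hx]
          exact ((mem_filter.mp hx).2).symm
        · rw [ext_val _ _ x hx]
    rw [Nat.card_congr (Equiv.ofBijective bwd ⟨hinj, hsurj⟩).symm]
    rw [nat_card_sigma]
    have hsummand : ∀ A : {A : Finset α // A.card = g a},
        Nat.card {f' : {x : α // x ∉ A.1} → β //
          ∀ j ∈ s', (univ.filter fun y => f' y = j).card = g j} = Nat.multinomial s' g :=
      fun A => IH _ g (hcompl A.1 A.2)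
    rw [Finset.sum_congr rfl (fun A _ => hsummand A), Finset.sum_const, smul_eq_mul,
      Finset.card_univ, Fintype.card_finset_len, Nat.multinomial_cons]
    congr 1
    rw [hg]

end Counting

/-- `Sge h n k` is the number of partitions of an `n`-set into exactly `k` blocks,
each block of size at least `h`. -/
noncomputable def Sge (h n k : ℕ) : ℕ :=
  Nat.card {P : Finpartition (Finset.univ : Finset (Fin n)) //
    P.parts.card = k ∧ ∀ p ∈ P.parts, h ≤ p.card}

section Partition

open Finset

variable {h n k : ℕ}

private def fibPart (f : Fin n → Fin k) (j : Fin k) : Finset (Fin n) :=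
  univ.filter fun x => f x = j

private lemma mem_fibPart {f : Fin n → Fin k} {j : Fin k} {x : Fin n} :
    x ∈ fibPart f j ↔ f x = j := by simp [fibPart]

private lemma fibPart_nonempty {f : Fin n → Fin k} (hh : 1 ≤ h)
    (hf : ∀ j, h ≤ (fibPart f j).card) (j : Fin k) : (fibPart f j).Nonempty :=
  Finset.card_pos.mp (lt_of_lt_of_le hh (hf j))

private lemma fibPart_injective {f : Fin n → Fin k} (hne : ∀ j, (fibPart f j).Nonempty) :
    Function.Injective (fibPart f) := by
  intro j j' hEq
  obtain ⟨x, hx⟩ := hne j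
  have hx' : x ∈ fibPart f j' := hEq ▸ hx
  rw [mem_fibPart] at hx hx'
  rw [← hx, hx']

/-- The finpartition of `Fin n` into the fibers of `f`. -/
private def fiberPartition (f : Fin n → Fin k) (hne : ∀ j, (fibPart f j).Nonempty) :
    Finpartition (univ : Finset (Fin n)) where
  parts := univ.image (fibPart f)
  supIndep := by
    rw [Finset.supIndep_iff_pairwiseDisjoint]
    intro p hp q hq hpq
    simp only [coe_image, Set.mem_image, coe_univ, Set.image_univ, Set.mem_range] at hp hq
    obtain ⟨j, rfl⟩ := hp
    obtain ⟨j', rfl⟩ := hq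
    simp only [Function.onFun, id_eq]
    rw [Finset.disjoint_left]
    intro x hx hx'
    rw [mem_fibPart] at hx hx'
    exact hpq (by rw [← hx, hx'])
  sup_parts := by
    apply le_antisymm
    · exact Finset.sup_le fun p _ => Finset.le_iff_subset.mpr (Finset.subset_univ p)
    · intro x _
      rw [Finset.mem_sup]
      exact ⟨fibPart f (f x), mem_image_of_mem _ (mem_univ _), mem_fibPart.mpr rfl⟩
  bot_notMem := by
    simp only [bot_eq_empty, mem_image, not_exists]
    intro j
    simp only [mem_univ, true_and]
    intro hEq
    obtain ⟨x, hx⟩ := hne j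
    rw [hEq] at hx
    exact absurd hx (Finset.notMem_empty x)

end Partition

section Partition2

open Finset

variable {h n k : ℕ}

private theorem card_fun_eq_Sge_mul (hh : 1 ≤ h) :
    Nat.card {f : Fin n → Fin k // ∀ j, h ≤ (fibPart f j).card}
      = Sge h n k * k.factorial := by
  classical
  set SubP := {P : Finpartition (univ : Finset (Fin n)) //
    P.parts.card = k ∧ ∀ p ∈ P.parts, h ≤ p.card} with hSubP
  have part_mem_univ : ∀ (P : Finpartition (univ : Finset (Fin n))) (x : Fin n),
      P.part x ∈ P.parts := fun P x => P.part_mem.mpr (mem_univ x)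
  set bf : ∀ (P : SubP), ({p // p ∈ P.1.parts} ≃ Fin k) → Fin n → Fin k :=
    fun P σ x => σ ⟨P.1.part x, part_mem_univ P.1 x⟩ with hbf
  have fib_bf : ∀ (P : SubP) (σ : {p // p ∈ P.1.parts} ≃ Fin k) (j : Fin k),
      fibPart (bf P σ) j = (σ.symm j).1 := by
    intro P σ j
    ext x
    rw [mem_fibPart]
    constructor
    · intro hx
      have h1 : (⟨P.1.part x, part_mem_univ P.1 x⟩ : {p // p ∈ P.1.parts}) = σ.symm j := by
        rw [← hx]; exact (σ.symm_apply_apply _).symm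
      have hpart : P.1.part x = (σ.symm j).1 := congrArg Subtype.val h1
      exact hpart ▸ P.1.mem_part (mem_univ x)
    · intro hx
      have hpart : P.1.part x = (σ.symm j).1 := P.1.part_eq_of_mem (σ.symm j).2 hx
      show σ ⟨P.1.part x, part_mem_univ P.1 x⟩ = j
      have h1 : (⟨P.1.part x, part_mem_univ P.1 x⟩ : {p // p ∈ P.1.parts}) = σ.symm j :=
        Subtype.ext hpart
      rw [h1, σ.apply_symm_apply]
  set bwd : (Σ P : SubP, ({p // p ∈ P.1.parts} ≃ Fin k)) →
      {f : Fin n → Fin k // ∀ j, h ≤ (fibPart f j).card} :=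
    fun q => ⟨bf q.1 q.2, fun j => by
      rw [fib_bf q.1 q.2 j]
      exact q.1.2.2 _ (q.2.symm j).2⟩ with hbwd
  have parts_eq : ∀ (P : SubP) (σ : {p // p ∈ P.1.parts} ≃ Fin k),
      P.1.parts = univ.image (fun j => (σ.symm j).1) := by
    intro P σ
    ext p
    simp only [mem_image, mem_univ, true_and]
    constructor
    · intro hp
      exact ⟨σ ⟨p, hp⟩, by rw [σ.symm_apply_apply]⟩
    · rintro ⟨j, rfl⟩
      exact (σ.symm j).2
  have hinj : Function.Injective bwd := by
    rintro ⟨P₁, σ₁⟩ ⟨P₂, σ₂⟩ hEq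
    have hfun : bf P₁ σ₁ = bf P₂ σ₂ := congrArg Subtype.val hEq
    have hfib : ∀ j, (σ₁.symm j).1 = (σ₂.symm j).1 := by
      intro j
      rw [← fib_bf P₁ σ₁ j, ← fib_bf P₂ σ₂ j, hfun]
    have hP : P₁ = P₂ := by
      apply Subtype.ext
      apply Finpartition.ext
      rw [parts_eq P₁ σ₁, parts_eq P₂ σ₂]
      exact Finset.image_congr fun j _ => hfib j
    subst hP
    refine congrArg (Sigma.mk P₁) ?_
    have hsymm : σ₁.symm = σ₂.symm := Equiv.ext fun j => Subtype.ext (hfib j)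
    calc σ₁ = σ₁.symm.symm := (Equiv.symm_symm σ₁).symm
    _ = σ₂.symm.symm := by rw [hsymm]
    _ = σ₂ := Equiv.symm_symm σ₂
  have hsurj : Function.Surjective bwd := by
    rintro ⟨f, hf⟩
    have hne : ∀ j, (fibPart f j).Nonempty := fibPart_nonempty hh hf
    set P := fiberPartition f hne with hP
    have hparts : ∀ j, fibPart f j ∈ P.parts := fun j => mem_image_of_mem _ (mem_univ j)
    have hcard : P.parts.card = k := by
      show (univ.image (fibPart f)).card = k
      rw [Finset.card_image_of_injective _ (fibPart_injective hne), card_univ,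
        Fintype.card_fin]
    have hsizes : ∀ p ∈ P.parts, h ≤ p.card := by
      intro p hp
      obtain ⟨j, _, rfl⟩ := mem_image.mp hp
      exact hf j
    set e : Fin k → {p // p ∈ P.parts} := fun j => ⟨fibPart f j, hparts j⟩ with he
    have hebij : Function.Bijective e := by
      constructor
      · intro j j' hjj'
        exact fibPart_injective hne (congrArg Subtype.val hjj')
      · rintro ⟨p, hp⟩
        obtain ⟨j, _, rfl⟩ := mem_image.mp hp
        exact ⟨j, rfl⟩
    set σ : {p // p ∈ P.parts} ≃ Fin k := (Equiv.ofBijective e hebij).symm with hσ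
    refine ⟨⟨⟨P, hcard, hsizes⟩, σ⟩, ?_⟩
    apply Subtype.ext
    funext x
    show σ ⟨P.part x, part_mem_univ P x⟩ = f x
    have hpx : P.part x = fibPart f (f x) :=
      P.part_eq_of_mem (hparts (f x)) (mem_fibPart.mpr rfl)
    have h1 : (⟨P.part x, part_mem_univ P x⟩ : {p // p ∈ P.parts}) = e (f x) :=
      Subtype.ext hpx
    rw [h1]
    show (Equiv.ofBijective e hebij).symm (e (f x)) = f x
    rw [show e (f x) = Equiv.ofBijective e hebij (f x) from rfl, Equiv.symm_apply_apply]
  rw [Nat.card_congr (Equiv.ofBijective bwd ⟨hinj, hsurj⟩).symm]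
  have E2 : (Σ P : SubP, ({p // p ∈ P.1.parts} ≃ Fin k)) ≃ SubP × (Fin k ≃ Fin k) := by
    refine Equiv.trans (Equiv.sigmaCongrRight fun P => ?_) (Equiv.sigmaEquivProd _ _)
    exact Equiv.equivCongr (Fintype.equivFinOfCardEq (by rw [Fintype.card_coe]; exact P.2.1))
      (Equiv.refl _)
  rw [Nat.card_congr E2, Nat.card_prod]
  congr 1
  rw [Nat.card_eq_fintype_card, Fintype.card_equiv (Equiv.refl _), Fintype.card_fin]

end Partition2


section Counting2

open Finset

variable {h n k : ℕ}

/-- The compositions of `n` into `k` parts, each of size at least `h`. -/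
private def Dset (h k n : ℕ) : Finset (Fin k → ℕ) :=
  (Fintype.piFinset fun _ : Fin k => Finset.range (n + 1)).filter
    fun g => (∀ i, h ≤ g i) ∧ ∑ i, g i = n

private lemma mem_Dset {g : Fin k → ℕ} :
    g ∈ Dset h k n ↔ (∀ i, h ≤ g i) ∧ ∑ i, g i = n := by
  simp only [Dset, Finset.mem_filter, Fintype.mem_piFinset, Finset.mem_range]
  constructor
  · exact fun hx => hx.2
  · intro hgood
    refine ⟨fun i => ?_, hgood⟩
    have h1 := Finset.single_le_sum (f := g) (fun i _ => Nat.zero_le _) (Finset.mem_univ i)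
    have h2 := hgood.2
    omega

private theorem factorial_mul_Sge_eq (hh : 1 ≤ h) :
    k.factorial * Sge h n k = ∑ g ∈ Dset h k n, Nat.multinomial univ g := by
  classical
  rw [mul_comm, ← card_fun_eq_Sge_mul hh]
  set S := Σ g : {g : Fin k → ℕ // g ∈ Dset h k n}, {f : Fin n → Fin k //
    ∀ j ∈ (univ : Finset (Fin k)), (univ.filter fun x => f x = j).card = g.1 j} with hS
  set bwd : S → {f : Fin n → Fin k // ∀ j, h ≤ (fibPart f j).card} := fun q =>
    ⟨q.2.1, fun j => by
      rw [show fibPart q.2.1 j = univ.filter fun x => q.2.1 x = j from rfl,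
        q.2.2 j (mem_univ j)]
      exact (mem_Dset.mp q.1.2).1 j⟩ with hbwd
  have hinj : Function.Injective bwd := by
    rintro ⟨g₁, f₁⟩ ⟨g₂, f₂⟩ hEq
    have hfun : f₁.1 = f₂.1 := congrArg Subtype.val hEq
    have hg : g₁ = g₂ := by
      apply Subtype.ext
      funext j
      rw [← f₁.2 j (mem_univ j), ← f₂.2 j (mem_univ j), hfun]
    subst hg
    exact congrArg (Sigma.mk g₁) (Subtype.ext hfun)
  have hsurj : Function.Surjective bwd := by
    rintro ⟨f, hf⟩
    have hg : (fun j => (fibPart f j).card) ∈ Dset h k n := by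
      rw [mem_Dset]
      refine ⟨hf, ?_⟩
      have h1 := sum_card_fiber f (univ : Finset (Fin k))
      have h2 : (univ.filter fun x : Fin n => f x ∈ (univ : Finset (Fin k))) = univ := by
        ext x; simp
      rw [h2, card_univ, Fintype.card_fin] at h1
      exact h1
    exact ⟨⟨⟨_, hg⟩, ⟨f, fun j _ => rfl⟩⟩, Subtype.ext rfl⟩
  rw [Nat.card_congr (Equiv.ofBijective bwd ⟨hinj, hsurj⟩).symm, nat_card_sigma]
  rw [Finset.sum_congr rfl (fun g _ => card_fiber_eq_multinomial univ (Fin n) g.1 (by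
    rw [Fintype.card_fin]; exact (mem_Dset.mp g.2).2))]
  exact Finset.sum_coe_sort (Dset h k n) (fun g => Nat.multinomial univ g)

private theorem factorial_mul_Sge_le (hh : 1 ≤ h) :
    k.factorial * Sge h n k ≤ k ^ n := by
  rw [mul_comm, ← card_fun_eq_Sge_mul (n := n) hh]
  calc Nat.card {f : Fin n → Fin k // ∀ j, h ≤ (fibPart f j).card}
      ≤ Nat.card (Fin n → Fin k) := by
        rw [Nat.card_eq_fintype_card, Nat.card_eq_fintype_card]
        exact Fintype.card_subtype_le _
  _ = k ^ n := by
        rw [Nat.card_eq_fintype_card, Fintype.card_fun, Fintype.card_fin, Fintype.card_fin]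

end Counting2


section Analysis

open Finset Real

private lemma tsum_pow_eq (c : ℕ → ℝ) (hc : Summable fun m => ‖c m‖) (k : ℕ) :
    Summable (fun g : Fin k → ℕ => ‖∏ i, c (g i)‖) ∧
      (∑' m, c m) ^ k = ∑' g : Fin k → ℕ, ∏ i, c (g i) := by
  induction k with
  | zero =>
    have h0 : ∀ g : Fin 0 → ℕ, (∏ i, c (g i)) = 1 := fun g => by simp
    constructor
    · exact Summable.of_finite
    · rw [pow_zero, tsum_eq_single (fun i => i.elim0) ?_]
      · rw [h0]
      · intro b hb
        exact absurd (funext fun i => i.elim0) (Ne.symm hb)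
  | succ k IH =>
    obtain ⟨IHs, IHe⟩ := IH
    set e : ℕ × (Fin k → ℕ) ≃ (Fin (k + 1) → ℕ) := Fin.consEquiv fun _ => ℕ with he
    have hcomp : ∀ p : ℕ × (Fin k → ℕ), (∏ i, c (e p i)) = c p.1 * ∏ i, c (p.2 i) := by
      intro p
      rw [Fin.prod_univ_succ]
      congr 1
    have hsum2 : Summable fun p : ℕ × (Fin k → ℕ) => ‖c p.1 * ∏ i, c (p.2 i)‖ :=
      Summable.mul_norm (f := c) (g := fun g : Fin k → ℕ => ∏ i, c (g i)) hc IHs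
    constructor
    · rw [← Equiv.summable_iff e]
      exact hsum2.congr fun p => by
        show ‖c p.1 * ∏ i, c (p.2 i)‖ = ‖∏ i, c (e p i)‖
        rw [hcomp p]
    · calc (∑' m, c m) ^ (k + 1) = (∑' m, c m) * (∑' m, c m) ^ k := by ring
      _ = (∑' m, c m) * ∑' g : Fin k → ℕ, ∏ i, c (g i) := by rw [IHe]
      _ = ∑' p : ℕ × (Fin k → ℕ), c p.1 * ∏ i, c (p.2 i) :=
          tsum_mul_tsum_of_summable_norm hc IHs
      _ = ∑' p : ℕ × (Fin k → ℕ), ∏ i, c (e p i) := tsum_congr fun p => (hcomp p).symm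
      _ = ∑' q : Fin (k + 1) → ℕ, ∏ i, c (q i) := Equiv.tsum_eq e fun q => ∏ i, c (q i)

private lemma exp_sub_sum_eq (h : ℕ) (x : ℝ) :
    Real.exp x - ∑ i ∈ Finset.range h, x ^ i / (Nat.factorial i : ℝ)
      = ∑' m : ℕ, (if h ≤ m then x ^ m / (Nat.factorial m : ℝ) else 0) := by
  have hs : Summable fun m : ℕ => x ^ m / (Nat.factorial m : ℝ) :=
    Real.summable_pow_div_factorial x
  have hexp : Real.exp x = ∑' m : ℕ, x ^ m / (Nat.factorial m : ℝ) := by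
    rw [Real.exp_eq_exp_ℝ, NormedSpace.exp_eq_tsum_div]
  have key : ∑' m : ℕ, (if h ≤ m then x ^ m / (Nat.factorial m : ℝ) else 0)
      = ∑' i : ℕ, x ^ (i + h) / (Nat.factorial (i + h) : ℝ) := by
    rw [eq_comm]
    have hinj : Function.Injective (fun i : ℕ => i + h) := add_left_injective h
    have hsupp : (Function.support fun m : ℕ =>
        if h ≤ m then x ^ m / (Nat.factorial m : ℝ) else 0) ⊆
        Set.range fun i : ℕ => i + h := by
      intro m hm
      rw [Function.mem_support] at hm
      by_cases hle : h ≤ m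
      · exact ⟨m - h, Nat.sub_add_cancel hle⟩
      · exact absurd (if_neg hle) hm
    have := Function.Injective.tsum_eq (f := fun m : ℕ =>
      if h ≤ m then x ^ m / (Nat.factorial m : ℝ) else 0) hinj hsupp
    rw [← this]
    refine tsum_congr fun i => ?_
    exact (if_pos (Nat.le_add_left h i)).symm
  rw [key, hexp]
  have := Summable.sum_add_tsum_nat_add (f := fun m : ℕ => x ^ m / (Nat.factorial m : ℝ)) h hs
  linarith [this]

private lemma integral_exp_pow {t : ℝ} (ht : 0 < t) (n : ℕ) :
    ∫ x in Set.Ioi (0:ℝ), Real.exp (-x / t) * x ^ n = (n.factorial : ℝ) * t ^ (n + 1) := by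
  have h1 : ∀ x : ℝ, Real.exp (-x / t) * x ^ n = x ^ ((n:ℝ) + 1 - 1) * Real.exp (-(t⁻¹ * x)) := by
    intro x
    rw [add_sub_cancel_right, Real.rpow_natCast, mul_comm]
    congr 2
    ring
  simp_rw [h1]
  rw [Real.integral_rpow_mul_exp_neg_mul_Ioi (by positivity) (by positivity)]
  rw [Real.Gamma_nat_eq_factorial, one_div, inv_inv,
    show ((n:ℝ) + 1) = ((n + 1 : ℕ) : ℝ) by push_cast; ring, Real.rpow_natCast]
  ring

private lemma integrableOn_exp_pow {t : ℝ} (ht : 0 < t) (n : ℕ) :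
    MeasureTheory.IntegrableOn (fun x : ℝ => Real.exp (-x / t) * x ^ n) (Set.Ioi (0:ℝ)) := by
  have hint := integrableOn_rpow_mul_exp_neg_mul_rpow (p := 1) (s := (n:ℝ)) (b := t⁻¹)
    (by
      have hn : (0:ℝ) ≤ (n : ℝ) := Nat.cast_nonneg n
      linarith) zero_lt_one (by positivity)
  apply MeasureTheory.IntegrableOn.congr_fun hint ?_ measurableSet_Ioi
  intro x hx
  show x ^ (n:ℝ) * Real.exp (-t⁻¹ * x ^ (1:ℝ)) = Real.exp (-x / t) * x ^ n
  rw [Real.rpow_one, Real.rpow_natCast, mul_comm]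
  congr 2
  ring

end Analysis


/-- For `0 < t < 1/k`,
`Σ_{n≥0} S_{≥h}(n,k) t^n = (1/(k! t)) ∫_0^∞ e^{-x/t}(e^x - 1 - x - ⋯ - x^{h-1}/(h-1)!)^k dx`. -/
theorem Sge_ogf_integral (h k : ℕ) (hh : 1 ≤ h) (hk : 1 ≤ k) (t : ℝ) (ht : 0 < t)
    (htk : t < 1 / (k : ℝ)) :
    ∑' n : ℕ, (Sge h n k : ℝ) * t ^ n
      = (1 / ((Nat.factorial k : ℝ) * t)) *
          ∫ x in Set.Ioi (0 : ℝ),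
            Real.exp (-x / t) *
              (Real.exp x - ∑ i ∈ Finset.range h, x ^ i / (Nat.factorial i : ℝ)) ^ k := by
  classical
  have hkR : (0:ℝ) < k := by exact_mod_cast hk
  have hkt : (k:ℝ) * t < 1 := by
    rw [lt_div_iff₀ hkR] at htk
    nlinarith
  set aIf : ℕ → ℝ := fun m => if h ≤ m then ((m.factorial : ℝ))⁻¹ else 0 with haIf
  set A : (Fin k → ℕ) → ℝ := fun g => ∏ i, aIf (g i) with hA
  set F : (Fin k → ℕ) → ℝ → ℝ :=
    fun g x => Real.exp (-x / t) * (A g * x ^ (∑ i, g i)) with hF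
  have haIf_nonneg : ∀ m, 0 ≤ aIf m := by
    intro m
    rw [haIf]
    dsimp only
    split <;> positivity
  have hA_nonneg : ∀ g, 0 ≤ A g := fun g => Finset.prod_nonneg fun i _ => haIf_nonneg _
  -- the integrand as a series
  have integrand_eq : ∀ x : ℝ,
      Real.exp (-x / t) * (Real.exp x - ∑ i ∈ Finset.range h, x ^ i / (Nat.factorial i : ℝ)) ^ k
        = ∑' g : Fin k → ℕ, F g x := by
    intro x
    set c : ℕ → ℝ := fun m => if h ≤ m then x ^ m / (Nat.factorial m : ℝ) else 0 with hc
    have hcs : Summable fun m => ‖c m‖ := by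
      apply Summable.of_nonneg_of_le (fun m => norm_nonneg _) ?_
        (Real.summable_pow_div_factorial |x|)
      intro m
      rw [hc]
      dsimp only
      split
      · rw [Real.norm_eq_abs, abs_div, abs_pow, Nat.abs_cast]
      · simp only [norm_zero]
        positivity
    obtain ⟨hsumk, hpow⟩ := tsum_pow_eq c hcs k
    rw [exp_sub_sum_eq h x, ← hc, hpow, ← tsum_mul_left]
    refine tsum_congr fun g => ?_
    rw [hF]
    dsimp only
    congr 1
    by_cases hall : ∀ i, h ≤ g i
    · rw [hA]
      dsimp only
      rw [← Finset.prod_pow_eq_pow_sum, ← Finset.prod_mul_distrib]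
      refine Finset.prod_congr rfl fun i _ => ?_
      rw [hc, haIf]
      dsimp only
      rw [if_pos (hall i), if_pos (hall i), div_eq_mul_inv, mul_comm]
    · push_neg at hall
      obtain ⟨i0, hi0⟩ := hall
      rw [Finset.prod_eq_zero (Finset.mem_univ i0)
        (by rw [hc]; dsimp only; rw [if_neg (Nat.not_le.mpr hi0)])]
      have hAg : A g = 0 := by
        rw [hA]
        dsimp only
        exact Finset.prod_eq_zero (Finset.mem_univ i0)
          (by rw [haIf]; dsimp only; rw [if_neg (Nat.not_le.mpr hi0)])
      rw [hAg, zero_mul]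
  -- integrability and values of the integrals
  have hFint : ∀ g : Fin k → ℕ, IntegrableOn (F g) (Set.Ioi (0:ℝ)) := by
    intro g
    have hFg : F g = fun x => A g * (Real.exp (-x / t) * x ^ (∑ i, g i)) := by
      funext x
      rw [hF]
      ring
    rw [hFg]
    exact (integrableOn_exp_pow ht _).const_mul _
  set G : (Fin k → ℕ) → ℝ :=
    fun g => A g * (((∑ i, g i).factorial : ℝ) * t ^ ((∑ i, g i) + 1)) with hG
  have hG_nonneg : ∀ g, 0 ≤ G g := by
    intro g
    rw [hG]
    dsimp only
    have := hA_nonneg g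
    positivity
  have hFval : ∀ g : Fin k → ℕ, ∫ x in Set.Ioi (0:ℝ), F g x = G g := by
    intro g
    have hFg : ∀ x : ℝ, F g x = A g * (Real.exp (-x / t) * x ^ (∑ i, g i)) := by
      intro x
      rw [hF]
      ring
    simp_rw [hFg]
    rw [MeasureTheory.integral_const_mul, integral_exp_pow ht, hG]
  have hFnorm : ∀ g : Fin k → ℕ, ∫ x in Set.Ioi (0:ℝ), ‖F g x‖ = G g := by
    intro g
    rw [← hFval g]
    apply MeasureTheory.setIntegral_congr_fun measurableSet_Ioi
    intro x hx
    have hx0 : (0:ℝ) < x := hx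
    show ‖F g x‖ = F g x
    rw [Real.norm_eq_abs, abs_of_nonneg]
    rw [hF]
    dsimp only
    have := hA_nonneg g
    positivity
  -- the reindexing injection
  set E : (Σ n : ℕ, {g : Fin k → ℕ // g ∈ Dset h k n}) → (Fin k → ℕ) :=
    fun p => p.2.1 with hE
  have hEinj : Function.Injective E := by
    rintro ⟨n₁, g₁⟩ ⟨n₂, g₂⟩ hEq
    rw [hE] at hEq
    dsimp only at hEq
    have hn : n₁ = n₂ := by
      rw [← (mem_Dset.mp g₁.2).2, ← (mem_Dset.mp g₂.2).2, hEq]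
    subst hn
    exact congrArg (Sigma.mk n₁) (Subtype.ext hEq)
  have hEsupp : Function.support G ⊆ Set.range E := by
    intro g hg
    rw [Function.mem_support] at hg
    have hAne : A g ≠ 0 := by
      intro h0
      apply hg
      rw [hG]
      dsimp only
      rw [h0, zero_mul]
    have hall : ∀ i, h ≤ g i := by
      intro i
      by_contra hi
      apply hAne
      rw [hA]
      exact Finset.prod_eq_zero (Finset.mem_univ i)
        (by rw [haIf]; dsimp only; rw [if_neg hi])
    exact ⟨⟨∑ i, g i, ⟨g, mem_Dset.mpr ⟨hall, rfl⟩⟩⟩, rfl⟩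
  -- fiberwise sums
  have hfiber : ∀ n : ℕ, ∑' g : {g : Fin k → ℕ // g ∈ Dset h k n}, G g.1
      = ((k.factorial : ℝ) * (Sge h n k : ℝ)) * t ^ (n + 1) := by
    intro n
    rw [Finset.tsum_subtype (Dset h k n) (fun g => G g)]
    have hterm : ∀ g ∈ Dset h k n,
        G g = ((Nat.multinomial Finset.univ g : ℝ) / (n.factorial : ℝ)) *
          ((n.factorial : ℝ) * t ^ (n + 1)) := by
      intro g hg
      obtain ⟨hall, hsumg⟩ := mem_Dset.mp hg
      have hAg : A g = (Nat.multinomial Finset.univ g : ℝ) / (n.factorial : ℝ) := by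
        have hspec := Nat.multinomial_spec Finset.univ g
        rw [hsumg] at hspec
        have hspecR : ((∏ i, (g i).factorial : ℕ) : ℝ) * (Nat.multinomial Finset.univ g : ℝ)
            = (n.factorial : ℝ) := by
          exact_mod_cast congrArg (Nat.cast (R := ℝ)) hspec
        have hprodne : ((∏ i, (g i).factorial : ℕ) : ℝ) ≠ 0 := by
          positivity
        rw [hA]
        dsimp only
        rw [Finset.prod_congr rfl (fun i _ => show aIf (g i) = ((g i).factorial : ℝ)⁻¹ from by
          rw [haIf]; dsimp only; rw [if_pos (hall i)])]
        rw [Finset.prod_inv_distrib]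
        rw [eq_div_iff (by positivity : (n.factorial : ℝ) ≠ 0)]
        rw [← hspecR]
        push_cast
        field_simp
      rw [hG]
      dsimp only
      rw [hAg, hsumg]
    rw [Finset.sum_congr rfl hterm, ← Finset.sum_mul, ← Finset.sum_div]
    have hcast : (∑ g ∈ Dset h k n, (Nat.multinomial Finset.univ g : ℝ))
        = (k.factorial : ℝ) * (Sge h n k : ℝ) := by
      rw [← Nat.cast_sum, ← factorial_mul_Sge_eq hh]
      push_cast
      ring
    rw [hcast]
    have hfne : (n.factorial : ℝ) ≠ 0 := by positivity
    field_simp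
  -- summability of G
  have hEsupp' : ∀ g ∉ Set.range E, G g = 0 := by
    intro g hg
    by_contra hne
    exact hg (hEsupp (Function.mem_support.mpr hne))
  have hGsum : Summable G := by
    rw [← Function.Injective.summable_iff hEinj hEsupp']
    apply (summable_sigma_of_nonneg (fun p => hG_nonneg _)).mpr
    refine ⟨fun n => Summable.of_finite, ?_⟩
    have hb : Summable fun n : ℕ => t * ((k:ℝ) * t) ^ n :=
      (summable_geometric_of_lt_one (by positivity) hkt).mul_left t
    apply Summable.of_nonneg_of_le ?_ ?_ hb
    · intro n
      exact tsum_nonneg fun g => hG_nonneg _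
    · intro n
      calc (∑' g : {g : Fin k → ℕ // g ∈ Dset h k n}, (G ∘ E) ⟨n, g⟩)
          = ∑' g : {g : Fin k → ℕ // g ∈ Dset h k n}, G g.1 := tsum_congr fun g => rfl
      _ = ((k.factorial : ℝ) * (Sge h n k : ℝ)) * t ^ (n + 1) := hfiber n
      _ ≤ t * ((k:ℝ) * t) ^ n := by
          have hle := factorial_mul_Sge_le (h := h) (n := n) (k := k) hh
          have hleR : ((k.factorial : ℝ) * (Sge h n k : ℝ)) ≤ (k:ℝ) ^ n := by
            exact_mod_cast hle
          have htp : (0:ℝ) < t ^ (n + 1) := pow_pos ht _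
          calc ((k.factorial : ℝ) * (Sge h n k : ℝ)) * t ^ (n + 1)
              ≤ (k:ℝ) ^ n * t ^ (n + 1) := mul_le_mul_of_nonneg_right hleR htp.le
          _ = t * ((k:ℝ) * t) ^ n := by rw [mul_pow]; ring
  -- rewrite the integral
  have hint_eq : (∫ x in Set.Ioi (0:ℝ), Real.exp (-x / t) *
        (Real.exp x - ∑ i ∈ Finset.range h, x ^ i / (Nat.factorial i : ℝ)) ^ k)
      = ∑' g : Fin k → ℕ, G g := by
    rw [MeasureTheory.integral_congr_ae (Filter.Eventually.of_forall fun x => integrand_eq x)]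
    rw [← MeasureTheory.integral_tsum_of_summable_integral_norm hFint
      (hGsum.congr (fun g => (hFnorm g).symm))]
    exact tsum_congr fun g => hFval g
  rw [hint_eq]
  -- regroup the series
  have hregroup : ∑' g : Fin k → ℕ, G g
      = ∑' n : ℕ, ((k.factorial : ℝ) * (Sge h n k : ℝ)) * t ^ (n + 1) := by
    rw [← Function.Injective.tsum_eq hEinj hEsupp]
    have hGE : Summable fun p : (Σ n : ℕ, {g : Fin k → ℕ // g ∈ Dset h k n}) => G (E p) :=
      (Function.Injective.summable_iff hEinj hEsupp').mpr hGsum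
    rw [Summable.tsum_sigma' (f := fun p : (Σ n : ℕ, {g : Fin k → ℕ // g ∈ Dset h k n}) => G (E p))
      (fun n => Summable.of_finite) hGE]
    exact tsum_congr fun n => (tsum_congr fun g => rfl).trans (hfiber n)
  rw [hregroup, ← tsum_mul_left]
  refine tsum_congr fun n => ?_
  have hfacne : (k.factorial : ℝ) ≠ 0 := by positivity
  have htne : t ≠ 0 := ht.ne'
  field_simp
  ring
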